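/- The set NCP(n) of non-crossing canonical partitions of [n] equals the set NCCP(n;132) of 132-avoiding noncommutative crossing partitions of [n]. -/

import Mathlib

namespace NCPAux
open List

lemma exists_min : ∀ (l : List ℕ), l ≠ [] → ∃ y ∈ l, ∀ z ∈ l, y ≤ z
  | [], h => absurd rfl h
  | a :: t, _ => by
    rcases eq_or_ne t [] with rfl | ht
    · exact ⟨a, by simp, by simp⟩
    · obtain ⟨y, hy, hmin⟩ := exists_min t ht
      rcases le_total a y with h | h
      · refine ⟨a, by simp, fun z hz => ?_⟩
        rcases mem_cons.mp hz with rfl | hz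
        · exact le_refl _
        · exact le_trans h (hmin z hz)
      · refine ⟨y, mem_cons_of_mem _ hy, fun z hz => ?_⟩
        rcases mem_cons.mp hz with rfl | hz
        · exact h
        · exact hmin z hz

lemma pos_of_mem_block {π : List (List ℕ)} {i x : ℕ} (hi : i < π.length)
    (hx : x ∈ π.getD i []) : ∃ p, p < π.flatten.length ∧ π.flatten.getD p 0 = x := by
  have hmem : x ∈ π.flatten := by
    rw [List.getD_eq_getElem _ _ hi] at hx
    exact mem_flatten.mpr ⟨_, List.getElem_mem hi, hx⟩
  obtain ⟨p, hp, hpe⟩ := List.mem_iff_getElem.mp hmem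
  exact ⟨p, hp, by rw [List.getD_eq_getElem _ _ hp, hpe]⟩

lemma block_of_pos1 {π : List (List ℕ)} {p : ℕ} (hp : p < π.flatten.length) :
    ∃ i, i < π.length ∧ π.flatten.getD p 0 ∈ π.getD i [] := by
  have hmem : π.flatten.getD p 0 ∈ π.flatten := by
    rw [List.getD_eq_getElem _ _ hp]; exact List.getElem_mem hp
  obtain ⟨l, hl, hxl⟩ := mem_flatten.mp hmem
  obtain ⟨i, hi, rfl⟩ := List.mem_iff_getElem.mp hl
  exact ⟨i, hi, by rwa [List.getD_eq_getElem _ _ hi]⟩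

lemma cross_pos {π : List (List ℕ)} : ∀ {i j x y : ℕ}, i < j → j < π.length →
    x ∈ π.getD i [] → y ∈ π.getD j [] →
    ∃ p q, p < q ∧ q < π.flatten.length ∧ π.flatten.getD p 0 = x ∧ π.flatten.getD q 0 = y := by
  induction π with
  | nil => intro i j x y hij hj hx hy; simp at hj
  | cons b π' ih =>
    intro i j x y hij hj hx hy
    cases j with
    | zero => omega
    | succ j' =>
      have hj' : j' < π'.length := by simpa using hj
      rw [List.getD_cons_succ] at hy
      cases i with
      | zero =>
        rw [List.getD_cons_zero] at hx
        obtain ⟨p, hp, hpe⟩ := List.mem_iff_getElem.mp hx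
        obtain ⟨q', hq', hqe⟩ := pos_of_mem_block hj' hy
        refine ⟨p, b.length + q', by omega, ?_, ?_, ?_⟩
        · simp only [flatten_cons, length_append]; omega
        · rw [flatten_cons, List.getD_append _ _ _ _ hp, List.getD_eq_getElem _ _ hp, hpe]
        · rw [flatten_cons, List.getD_append_right _ _ _ _ (by omega)]
          simpa using hqe
      | succ i' =>
        rw [List.getD_cons_succ] at hx
        obtain ⟨p, q, hpq, hq, hpe, hqe⟩ := ih (by omega : i' < j') hj' hx hy
        refine ⟨b.length + p, b.length + q, by omega, ?_, ?_, ?_⟩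
        · simp only [flatten_cons, length_append]; omega
        · rw [flatten_cons, List.getD_append_right _ _ _ _ (by omega)]
          simpa using hpe
        · rw [flatten_cons, List.getD_append_right _ _ _ _ (by omega)]
          simpa using hqe

lemma same_block_pos {π : List (List ℕ)} (hs : ∀ b ∈ π, b.Pairwise (· < ·)) :
    ∀ {i x y : ℕ}, i < π.length → x ∈ π.getD i [] → y ∈ π.getD i [] → x < y →
    ∃ p q, p < q ∧ q < π.flatten.length ∧ π.flatten.getD p 0 = x ∧ π.flatten.getD q 0 = y := by
  induction π with
  | nil => intro i x y hi; simp at hi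
  | cons b π' ih =>
    intro i x y hi hx hy hxy
    cases i with
    | zero =>
      rw [List.getD_cons_zero] at hx hy
      obtain ⟨p, hp, hpe⟩ := List.mem_iff_getElem.mp hx
      obtain ⟨q, hq, hqe⟩ := List.mem_iff_getElem.mp hy
      have hbs : b.Pairwise (· < ·) := hs b mem_cons_self
      have hpq : p < q := by
        rcases Nat.lt_trichotomy p q with h | h | h
        · exact h
        · exfalso; subst h; rw [hpe] at hqe; omega
        · exfalso
          have := List.pairwise_iff_getElem.mp hbs q p hq hp h
          rw [hpe, hqe] at this; omega
      refine ⟨p, q, hpq, ?_, ?_, ?_⟩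
      · simp only [flatten_cons, length_append]; omega
      · rw [flatten_cons, List.getD_append _ _ _ _ hp, List.getD_eq_getElem _ _ hp, hpe]
      · rw [flatten_cons, List.getD_append _ _ _ _ hq, List.getD_eq_getElem _ _ hq, hqe]
    | succ i' =>
      rw [List.getD_cons_succ] at hx hy
      have hi' : i' < π'.length := by simpa using hi
      obtain ⟨p, q, hpq, hq, hpe, hqe⟩ :=
        ih (fun c hc => hs c (mem_cons_of_mem _ hc)) hi' hx hy hxy
      refine ⟨b.length + p, b.length + q, by omega, ?_, ?_, ?_⟩
      · simp only [flatten_cons, length_append]; omega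
      · rw [flatten_cons, List.getD_append_right _ _ _ _ (by omega)]
        simpa using hpe
      · rw [flatten_cons, List.getD_append_right _ _ _ _ (by omega)]
        simpa using hqe

lemma block_of_pos {π : List (List ℕ)} (hs : ∀ b ∈ π, b.Pairwise (· < ·)) :
    ∀ {p q : ℕ}, p < q → q < π.flatten.length →
    ∃ i j, i ≤ j ∧ j < π.length ∧ π.flatten.getD p 0 ∈ π.getD i [] ∧
      π.flatten.getD q 0 ∈ π.getD j [] ∧
      (i = j → π.flatten.getD p 0 < π.flatten.getD q 0) := by
  induction π with
  | nil => intro p q hpq hq; simp at hq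
  | cons b π' ih =>
    intro p q hpq hq
    rw [flatten_cons] at hq ⊢
    rw [length_append] at hq
    by_cases hqb : q < b.length
    · have hpb : p < b.length := lt_trans hpq hqb
      have hbs : b.Pairwise (· < ·) := hs b mem_cons_self
      refine ⟨0, 0, le_refl _, by simp, ?_, ?_, ?_⟩
      · rw [List.getD_append _ _ _ _ hpb, List.getD_cons_zero, List.getD_eq_getElem _ _ hpb]
        exact List.getElem_mem hpb
      · rw [List.getD_append _ _ _ _ hqb, List.getD_cons_zero, List.getD_eq_getElem _ _ hqb]
        exact List.getElem_mem hqb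
      · intro _
        rw [List.getD_append _ _ _ _ hpb, List.getD_append _ _ _ _ hqb,
          List.getD_eq_getElem _ _ hpb, List.getD_eq_getElem _ _ hqb]
        exact List.pairwise_iff_getElem.mp hbs p q hpb hqb hpq
    · have hq' : q - b.length < π'.flatten.length := by omega
      by_cases hpb : p < b.length
      · obtain ⟨j', hj', hmem⟩ := block_of_pos1 hq'
        refine ⟨0, j' + 1, by omega, by simpa using hj', ?_, ?_, by omega⟩
        · rw [List.getD_append _ _ _ _ hpb, List.getD_cons_zero, List.getD_eq_getElem _ _ hpb]
          exact List.getElem_mem hpb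
        · rw [List.getD_append_right _ _ _ _ (by omega), List.getD_cons_succ]
          exact hmem
      · obtain ⟨i', j', hij, hj', hm1, hm2, hcl⟩ :=
          ih (fun c hc => hs c (mem_cons_of_mem _ hc))
            (show p - b.length < q - b.length by omega) hq'
        refine ⟨i' + 1, j' + 1, by omega, by simpa using hj', ?_, ?_, ?_⟩
        · rw [List.getD_append_right _ _ _ _ (by omega), List.getD_cons_succ]
          exact hm1
        · rw [List.getD_append_right _ _ _ _ (by omega), List.getD_cons_succ]
          exact hm2
        · intro h
          rw [List.getD_append_right _ _ _ _ (by omega : b.length ≤ p),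
            List.getD_append_right _ _ _ _ (by omega : b.length ≤ q)]
          exact hcl (by omega)

lemma disjoint_blocks {π : List (List ℕ)} (hnd : π.flatten.Nodup) {i j x : ℕ}
    (hi : i < π.length) (hj : j < π.length) (hij : i ≠ j)
    (hx : x ∈ π.getD i []) (hx' : x ∈ π.getD j []) : False := by
  have hpw : π.Pairwise List.Disjoint := (List.nodup_flatten.mp hnd).2
  rw [List.getD_eq_getElem _ _ hi] at hx
  rw [List.getD_eq_getElem _ _ hj] at hx'
  rcases Nat.lt_or_ge i j with h | h
  · exact (List.pairwise_iff_getElem.mp hpw i j hi hj h) hx hx'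
  · exact (List.pairwise_iff_getElem.mp hpw j i hj hi (by omega)) hx' hx

lemma pos_unique {w : List ℕ} (hnd : w.Nodup) {p q : ℕ} (hp : p < w.length)
    (hq : q < w.length) (h : w.getD p 0 = w.getD q 0) : p = q := by
  rw [List.getD_eq_getElem _ _ hp, List.getD_eq_getElem _ _ hq] at h
  exact (List.Nodup.getElem_inj_iff hnd).mp h

lemma canonical_lt {π : List (List ℕ)}
    (hcan : π.Chain' (fun b b' => ∃ y ∈ b', ∀ x ∈ b, y < x)) {i j : ℕ}
    (hij : i < j) (hj : j < π.length) :
    ∃ y ∈ π.getD j [], ∀ x ∈ π.getD i [], y < x := by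
  have : IsTrans (List ℕ) (fun b b' => ∃ y ∈ b', ∀ x ∈ b, y < x) := ⟨by
    rintro a b c ⟨y, hy, hlt⟩ ⟨z, hz, hlt'⟩
    exact ⟨z, hz, fun x hx => lt_trans (hlt' y hy) (hlt x hx)⟩⟩
  have hpw := List.isChain_iff_pairwise.mp hcan
  have hi : i < π.length := lt_trans hij hj
  have := List.pairwise_iff_getElem.mp hpw i j hi hj hij
  rw [List.getD_eq_getElem _ _ hi, List.getD_eq_getElem _ _ hj]
  exact this

end NCPAux



/-- A noncommutative crossing partition of `[n] = {1,...,n}`: a sequence of blocks such that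
every integer in `[n]` appears exactly once, each block is nonempty and strictly increasing,
and `max(π_i) > min(π_{i+1})` for consecutive blocks. -/
def IsNCCP (n : ℕ) (π : List (List ℕ)) : Prop :=
  π.flatten.Perm (List.range' 1 n) ∧
  (∀ b ∈ π, b ≠ [] ∧ b.Pairwise (· < ·)) ∧
  π.Chain' (fun b b' => ∃ x ∈ b, ∃ y ∈ b', y < x)

/-- Non-crossing: there are no `a < b < c < d` with `a, c` in one block and `b, d`
in a different block. -/
def IsNonCrossing (π : List (List ℕ)) : Prop :=
  ∀ a b c d : ℕ, a < b → b < c → c < d →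
    ∀ i j : ℕ, i < π.length → j < π.length → i ≠ j →
      ¬(a ∈ π.getD i [] ∧ c ∈ π.getD i [] ∧ b ∈ π.getD j [] ∧ d ∈ π.getD j [])

/-- Canonical: the minima of the blocks strictly decrease from left to right, i.e.
`min(π_{i+1}) < min(π_i)` for consecutive blocks. -/
def IsCanonicalPart (π : List (List ℕ)) : Prop :=
  π.Chain' (fun b b' => ∃ y ∈ b', ∀ x ∈ b, y < x)

/-- A word avoids the pattern 132: no positions `i < j < k` with `w_i < w_k < w_j`. -/
def Avoids132 (w : List ℕ) : Prop :=
  ¬ ∃ i j k : ℕ, i < j ∧ j < k ∧ k < w.length ∧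
      w.getD i 0 < w.getD k 0 ∧ w.getD k 0 < w.getD j 0


open NCPAux in
theorem ncp_eq_nccp132 (n : ℕ) :
    {π : List (List ℕ) | IsNCCP n π ∧ IsNonCrossing π ∧ IsCanonicalPart π} =
    {π : List (List ℕ) | IsNCCP n π ∧ Avoids132 π.flatten} := by
  ext π
  simp only [Set.mem_setOf_eq]
  constructor
  · rintro ⟨hnccp, hnc, hcan⟩
    refine ⟨hnccp, ?_⟩
    rintro ⟨i, j, k, hij, hjk, hk, h1, h2⟩
    have hs : ∀ b ∈ π, b.Pairwise (· < ·) := fun b hb => (hnccp.2.1 b hb).2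
    have hnd : π.flatten.Nodup := hnccp.1.nodup_iff.mpr (List.nodup_range' _ (h := Nat.one_pos))
    obtain ⟨bi, bj, hbij, hbj, hmi, hmj1, hcl1⟩ := block_of_pos hs hij (lt_trans hjk hk)
    obtain ⟨bj', bk, hbjk, hbk, hmj2, hmk, hcl2⟩ := block_of_pos hs hjk hk
    have hbj'lt : bj' < π.length := lt_of_le_of_lt hbjk hbk
    have hbjeq : bj = bj' := by
      by_contra hne
      exact disjoint_blocks hnd hbj hbj'lt hne hmj1 hmj2
    subst hbjeq
    rcases eq_or_lt_of_le hbjk with heq | hlt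
    · exact absurd (hcl2 heq) (not_lt.mpr (le_of_lt h2))
    · obtain ⟨y, hy, hylt⟩ := canonical_lt hcan hlt hbk
      rcases eq_or_lt_of_le hbij with heqij | hltij
      · have hwi : π.flatten.getD i 0 ∈ π.getD bj [] := heqij ▸ hmi
        exact hnc y (π.flatten.getD i 0) (π.flatten.getD k 0) (π.flatten.getD j 0)
          (hylt _ hwi) h1 h2 bk bj hbk hbj'lt (by omega) ⟨hy, hmk, hwi, hmj2⟩
      · obtain ⟨z, hz, hzlt⟩ := canonical_lt hcan hltij hbj'lt
        have hyz : y < z := hylt z hz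
        have hzwi : z < π.flatten.getD i 0 := hzlt _ hmi
        rcases lt_or_ge z (π.flatten.getD k 0) with hzk | hzk
        · exact hnc y z (π.flatten.getD k 0) (π.flatten.getD j 0)
            hyz hzk h2 bk bj hbk hbj'lt (by omega) ⟨hy, hmk, hz, hmj2⟩
        · omega
  · rintro ⟨hnccp, hav⟩
    have hs : ∀ b ∈ π, b.Pairwise (· < ·) := fun b hb => (hnccp.2.1 b hb).2
    have hnd : π.flatten.Nodup := hnccp.1.nodup_iff.mpr (List.nodup_range' _ (h := Nat.one_pos))
    refine ⟨hnccp, ?_, ?_⟩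
    · rintro a b c d hab hbc hcd i j hi hj hij ⟨ha, hc, hb, hd⟩
      rcases Nat.lt_or_ge i j with hlt | hge
      · obtain ⟨pa, pc, hpac, hpc, hea, hec⟩ := same_block_pos hs hi ha hc (lt_trans hab hbc)
        obtain ⟨pc2, pb, hpcb, hpb, hec2, heb⟩ := cross_pos hlt hj hc hb
        have hcc : pc = pc2 :=
          pos_unique hnd hpc (lt_trans hpcb hpb) (by rw [hec, hec2])
        exact hav ⟨pa, pc, pb, hpac, hcc ▸ hpcb, hpb,
          by rw [hea, heb]; exact hab, by rw [heb, hec]; exact hbc⟩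
      · have hji : j < i := by omega
        obtain ⟨pb, pd, hpbd, hpd, heb, hed⟩ := same_block_pos hs hj hb hd (lt_trans hbc hcd)
        obtain ⟨pd2, pc, hpdc, hpc, hed2, hec⟩ := cross_pos hji hi hd hc
        have hdd : pd = pd2 :=
          pos_unique hnd hpd (lt_trans hpdc hpc) (by rw [hed, hed2])
        exact hav ⟨pb, pd, pc, hpbd, hdd ▸ hpdc, hpc,
          by rw [heb, hec]; exact hbc, by rw [hec, hed]; exact hcd⟩
    · rw [IsCanonicalPart]; refine List.isChain_iff_getElem.mpr ?_
      intro l hl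
      have hl1 : l < π.length := by omega
      have hl2 : l + 1 < π.length := by omega
      obtain ⟨x1, hx1, y1, hy1, hyx⟩ := List.isChain_iff_getElem.mp hnccp.2.2 l hl
      have hgd1 : π.getD l [] = π[l] := List.getD_eq_getElem _ _ hl1
      have hgd2 : π.getD (l + 1) [] = π[l + 1] := List.getD_eq_getElem _ _ hl2
      have hB'ne : π[l + 1] ≠ [] := (hnccp.2.1 _ (List.getElem_mem hl2)).1
      obtain ⟨y0, hy0, hy0min⟩ := exists_min _ hB'ne
      refine ⟨y0, hy0, ?_⟩
      intro x0 hx0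
      by_contra hcon
      push_neg at hcon
      have hne : x0 ≠ y0 := by
        intro h
        exact disjoint_blocks hnd hl1 hl2 (by omega) (hgd1 ▸ hx0) (hgd2 ▸ (h ▸ hy0))
      have hxy0 : x0 < y0 := lt_of_le_of_ne hcon hne
      have hy0x1 : y0 < x1 := lt_of_le_of_lt (hy0min y1 hy1) hyx
      obtain ⟨p0, p1, hp01, hp1, he0, he1⟩ :=
        same_block_pos hs hl1 (hgd1 ▸ hx0) (hgd1 ▸ hx1) (lt_trans hxy0 hy0x1)
      obtain ⟨p1', p2, hp12, hp2, he1', he2⟩ :=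
        cross_pos (Nat.lt_succ_self l) hl2 (hgd1 ▸ hx1) (hgd2 ▸ hy0)
      have h11 : p1 = p1' :=
        pos_unique hnd hp1 (lt_trans hp12 hp2) (by rw [he1, he1'])
      exact hav ⟨p0, p1, p2, hp01, h11 ▸ hp12, hp2,
        by rw [he0, he2]; exact hxy0, by rw [he2, he1]; exact hy0x1⟩
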